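/- Scaled supremum interpolation bound (key inequality in the proof of Theorem 4.5): Let ρ>0, α∈(0,1/2), and p>1/α. There is a constant C, depending only on ρ, α, p, such that for every L ≥ 1 and every continuously differentiable B:ℝ→ℂ with finite ‖B‖_{L^p_ρ} and ‖B‖_{H¹_ρ}, sup_{|x|≤L}|B(x)| ≤ C · L^{(1/p)(1−2α)(ρ−1) + α(1+ρ)} · ‖B‖_{L^p_ρ}^{1−2α} · ‖B‖_{H¹_ρ}^{2α}. -/

import Mathlib

open MeasureTheory Set

/-- The weight `w_ρ(x) = (1+x²)^{-ρ/2}`. -/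
noncomputable def wgt (ρ x : ℝ) : ℝ := (1 + x ^ 2) ^ (-(ρ / 2))

/-- Weighted `L^p` norm of a complex-valued function. -/
noncomputable def LpWC (ρ p : ℝ) (u : ℝ → ℂ) : ℝ :=
  (∫ x : ℝ, wgt ρ x * ‖u x‖ ^ p) ^ (1 / p)

/-- Weighted `H¹` norm of a complex-valued function. -/
noncomputable def H1WC (ρ : ℝ) (u : ℝ → ℂ) : ℝ :=
  Real.sqrt ((∫ x : ℝ, wgt ρ x * ‖u x‖ ^ 2) + ∫ x : ℝ, wgt ρ x * ‖deriv u x‖ ^ 2)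

/-- Hölder on an interval against the constant 1. -/
lemma holder_Icc {f : ℝ → ℝ} (hf : Continuous f) (hnn : ∀ x, 0 ≤ f x)
    {a b r : ℝ} (hab : a ≤ b) (hr : 1 < r) :
    ∫ y in Icc a b, f y ≤ (b - a) ^ (1 - 1/r) * (∫ y in Icc a b, f y ^ r) ^ (1/r) := by
  set μ := volume.restrict (Icc a b) with hμ
  haveI : IsFiniteMeasure μ := by
    constructor
    rw [hμ, Measure.restrict_apply_univ, Real.volume_Icc]
    exact ENNReal.ofReal_lt_top
  obtain ⟨M, hM⟩ := (isCompact_Icc (a := a) (b := b)).exists_bound_of_continuousOn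
    hf.continuousOn
  have hfm : MemLp f (ENNReal.ofReal r) μ := by
    have htop : MemLp f ⊤ μ :=
      memLp_top_of_bound hf.aestronglyMeasurable M
        ((ae_restrict_iff' measurableSet_Icc).2 (Filter.Eventually.of_forall hM))
    exact htop.mono_exponent le_top
  have hpq := Real.HolderConjugate.conjExponent hr
  have hgm : MemLp (fun _ : ℝ => (1:ℝ)) (ENNReal.ofReal (Real.conjExponent r)) μ :=
    memLp_const 1
  have key := integral_mul_le_Lp_mul_Lq_of_nonneg (μ := μ) hpq
    (Filter.Eventually.of_forall hnn)
    (Filter.Eventually.of_forall (fun _ => (zero_le_one : (0:ℝ) ≤ 1))) hfm hgm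
  simp only [mul_one, Real.one_rpow] at key
  have hconst : ∫ _ in Icc a b, (1:ℝ) = b - a := by
    simp [Real.volume_Icc, ENNReal.toReal_ofReal (sub_nonneg.2 hab), hab]
  have hq : 1 / Real.conjExponent r = 1 - 1/r := by
    have := hpq.one_sub_inv
    rw [one_div, one_div, ← this]
  calc ∫ y in Icc a b, f y ≤ (∫ y in Icc a b, f y ^ r) ^ (1/r)
        * (∫ _ in Icc a b, (1:ℝ)) ^ (1 / Real.conjExponent r) := key
    _ = (b - a) ^ (1 - 1/r) * (∫ y in Icc a b, f y ^ r) ^ (1/r) := by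
        rw [hconst, hq, mul_comm]

lemma sup_le_avg_add (B : ℝ → ℂ) (hB : ContDiff ℝ 1 B) {a δ : ℝ} (hδ : 0 < δ)
    {x0 : ℝ} (hx0 : x0 ∈ Icc a (a + δ)) :
    ‖B x0‖ ≤ (1/δ) * (∫ y in Icc a (a+δ), ‖B y‖) + ∫ y in Icc a (a+δ), ‖deriv B y‖ := by
  have hcont : Continuous B := hB.continuous
  have hcd : Continuous (deriv B) := hB.continuous_deriv le_rfl
  have hJint : IntegrableOn (fun y => ‖B y‖) (Icc a (a+δ)) volume :=
    hcont.norm.integrableOn_Icc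
  have hJint' : IntegrableOn (fun y => ‖deriv B y‖) (Icc a (a+δ)) volume :=
    hcd.norm.integrableOn_Icc
  have key : ∀ y ∈ Icc a (a+δ), ‖B x0‖ ≤ ‖B y‖ + ∫ t in Icc a (a+δ), ‖deriv B t‖ := by
    intro y hy
    have ftc : ∫ t in y..x0, deriv B t = B x0 - B y :=
      intervalIntegral.integral_deriv_eq_sub
        (fun t _ => (hB.differentiable one_ne_zero).differentiableAt)
        (hcd.intervalIntegrable _ _)
    have h2 : ‖B x0 - B y‖ ≤ ∫ t in Icc a (a+δ), ‖deriv B t‖ := by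
      rw [← ftc]
      refine (intervalIntegral.norm_integral_le_integral_norm_uIoc).trans ?_
      refine setIntegral_mono_set hJint'
        (Filter.Eventually.of_forall fun t => norm_nonneg _) ?_
      exact HasSubset.Subset.eventuallyLE
        (Set.uIoc_subset_uIcc.trans (uIcc_subset_Icc hy hx0))
    calc ‖B x0‖ = ‖B y + (B x0 - B y)‖ := by rw [add_sub_cancel]
      _ ≤ ‖B y‖ + ‖B x0 - B y‖ := norm_add_le _ _
      _ ≤ ‖B y‖ + ∫ t in Icc a (a+δ), ‖deriv B t‖ := by linarith
  have h3 : ∫ _ in Icc a (a+δ), ‖B x0‖ ≤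
      ∫ y in Icc a (a+δ), (‖B y‖ + ∫ t in Icc a (a+δ), ‖deriv B t‖) := by
    refine setIntegral_mono_on (integrableOn_const ?_)
      (hJint.add (integrableOn_const ?_)) measurableSet_Icc key
    · rw [Real.volume_Icc]; exact ENNReal.ofReal_ne_top
    · rw [Real.volume_Icc]; exact ENNReal.ofReal_ne_top
  rw [setIntegral_const, integral_add hJint (integrableOn_const (by
    rw [Real.volume_Icc]; exact ENNReal.ofReal_ne_top)), setIntegral_const] at h3
  have hvol : volume.real (Icc a (a+δ)) = δ := by
    rw [Measure.real, Real.volume_Icc, add_sub_cancel_left, ENNReal.toReal_ofReal hδ.le]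
  rw [hvol] at h3
  simp only [smul_eq_mul] at h3
  calc ‖B x0‖ = (1/δ) * (δ * ‖B x0‖) := by field_simp
    _ ≤ (1/δ) * ((∫ y in Icc a (a+δ), ‖B y‖) + δ * ∫ y in Icc a (a+δ), ‖deriv B y‖) :=
        mul_le_mul_of_nonneg_left h3 (by positivity)
    _ = (1/δ) * (∫ y in Icc a (a+δ), ‖B y‖) + ∫ y in Icc a (a+δ), ‖deriv B y‖ := by
        field_simp

lemma wgt_pos (ρ x : ℝ) : 0 < wgt ρ x :=
  Real.rpow_pos_of_pos (by positivity) _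

lemma wgt_continuous (ρ : ℝ) : Continuous (wgt ρ) := by
  unfold wgt
  refine (continuous_const.add (continuous_pow 2)).rpow_const (fun x => Or.inl ?_)
  show (1:ℝ) + x ^ 2 ≠ 0
  positivity

lemma wgt_lower {ρ L x : ℝ} (hρ : 0 < ρ) (hL : 1 ≤ L) (hx : |x| ≤ L) :
    1 ≤ (2:ℝ)^(ρ/2) * L^ρ * wgt ρ x := by
  have hL0 : (0:ℝ) < L := lt_of_lt_of_le one_pos hL
  have h1 : (1 + x^2 : ℝ) ≤ 2 * L^2 := by
    have : x^2 ≤ L^2 := by nlinarith [abs_nonneg x, sq_abs x, abs_le.1 hx]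
    nlinarith
  have h2 : ((1 + x^2 : ℝ)) ^ (ρ/2) ≤ (2 * L^2) ^ (ρ/2) :=
    Real.rpow_le_rpow (by positivity) h1 (by positivity)
  have h3 : ((2 : ℝ) * L^2) ^ (ρ/2) = (2:ℝ)^(ρ/2) * L^ρ := by
    rw [Real.mul_rpow (by norm_num) (by positivity), ← Real.rpow_natCast L 2,
      ← Real.rpow_mul hL0.le]
    congr 1
    push_cast
    ring
  have h4 : ((1 + x^2 : ℝ)) ^ (ρ/2) * wgt ρ x = 1 := by
    rw [wgt, ← Real.rpow_add (by positivity)]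
    simp
  calc (1:ℝ) = ((1 + x^2 : ℝ)) ^ (ρ/2) * wgt ρ x := h4.symm
    _ ≤ (2:ℝ)^(ρ/2) * L^ρ * wgt ρ x := by
        have := (wgt_pos ρ x).le
        apply mul_le_mul_of_nonneg_right (h2.trans_eq h3) this

lemma set_le_weighted {ρ L : ℝ} (hρ : 0 < ρ) (hL : 1 ≤ L) {f : ℝ → ℝ}
    (hf : Continuous f) (hnn : ∀ x, 0 ≤ f x)
    (hint : Integrable (fun x => wgt ρ x * f x))
    {a b : ℝ} (hsub : Icc a b ⊆ Icc (-L) L) :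
    ∫ y in Icc a b, f y ≤ (2:ℝ)^(ρ/2) * L^ρ * ∫ x, wgt ρ x * f x := by
  have hwc : Continuous fun x => (2:ℝ)^(ρ/2) * L^ρ * (wgt ρ x * f x) :=
    continuous_const.mul ((wgt_continuous ρ).mul hf)
  have h1 : ∫ y in Icc a b, f y ≤
      ∫ y in Icc a b, (2:ℝ)^(ρ/2) * L^ρ * (wgt ρ y * f y) := by
    refine setIntegral_mono_on hf.integrableOn_Icc hwc.integrableOn_Icc
      measurableSet_Icc ?_
    intro y hy
    have habs : |y| ≤ L := abs_le.2 (hsub hy)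
    have := wgt_lower hρ hL habs
    have hw := (wgt_pos ρ y).le
    nlinarith [hnn y, mul_le_mul_of_nonneg_right this (hnn y)]
  have h2 : ∫ y in Icc a b, (2:ℝ)^(ρ/2) * L^ρ * (wgt ρ y * f y) =
      (2:ℝ)^(ρ/2) * L^ρ * ∫ y in Icc a b, wgt ρ y * f y := by
    rw [integral_const_mul]
  have h3 : ∫ y in Icc a b, wgt ρ y * f y ≤ ∫ x, wgt ρ x * f x :=
    setIntegral_le_integral hint
      (Filter.Eventually.of_forall fun x => mul_nonneg (wgt_pos ρ x).le (hnn x))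
  calc ∫ y in Icc a b, f y ≤ _ := h1
    _ = _ := h2
    _ ≤ (2:ℝ)^(ρ/2) * L^ρ * ∫ x, wgt ρ x * f x := by
        apply mul_le_mul_of_nonneg_left h3 (by positivity)

lemma interval_term_bound {ρ L : ℝ} (hρ : 0 < ρ) (hL : 1 ≤ L) {g : ℝ → ℂ}
    (hg : Continuous g) {r : ℝ} (hr : 1 < r)
    (hint : Integrable (fun x => wgt ρ x * ‖g x‖ ^ r))
    {a δ : ℝ} (hδ : 0 < δ) (hsub : Icc a (a+δ) ⊆ Icc (-L) L) :
    ∫ y in Icc a (a+δ), ‖g y‖ ≤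
      δ^(1-1/r) * (((2:ℝ)^(ρ/2) * L^ρ) ^ (1/r) *
        (∫ x, wgt ρ x * ‖g x‖ ^ r) ^ (1/r)) := by
  have hnn : ∀ x : ℝ, (0:ℝ) ≤ ‖g x‖ := fun x => norm_nonneg _
  have hab : a ≤ a + δ := le_add_of_nonneg_right hδ.le
  have h1 := holder_Icc hg.norm hnn hab hr
  rw [add_sub_cancel_left] at h1
  have hIset : 0 ≤ ∫ y in Icc a (a+δ), ‖g y‖ ^ r :=
    integral_nonneg fun x => Real.rpow_nonneg (hnn x) _
  have hIfull : 0 ≤ ∫ x, wgt ρ x * ‖g x‖ ^ r :=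
    integral_nonneg fun x => mul_nonneg (wgt_pos ρ x).le (Real.rpow_nonneg (hnn x) _)
  have h2 : ∫ y in Icc a (a+δ), ‖g y‖ ^ r ≤
      (2:ℝ)^(ρ/2) * L^ρ * ∫ x, wgt ρ x * ‖g x‖ ^ r :=
    set_le_weighted hρ hL
      (hg.norm.rpow_const fun x => Or.inr (by positivity))
      (fun x => Real.rpow_nonneg (hnn x) _) hint hsub
  have h3 : (∫ y in Icc a (a+δ), ‖g y‖ ^ r) ^ (1/r) ≤
      ((2:ℝ)^(ρ/2) * L^ρ) ^ (1/r) * (∫ x, wgt ρ x * ‖g x‖ ^ r) ^ (1/r) := by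
    rw [← Real.mul_rpow (by positivity) hIfull]
    exact Real.rpow_le_rpow hIset h2 (by positivity)
  calc ∫ y in Icc a (a+δ), ‖g y‖ ≤ δ ^ (1-1/r) * (∫ y in Icc a (a+δ), ‖g y‖ ^ r) ^ (1/r) := h1
    _ ≤ _ := mul_le_mul_of_nonneg_left h3 (Real.rpow_nonneg hδ.le _)

theorem scaled_sup_interpolation
    (ρ α p : ℝ) (hρ : 0 < ρ) (hα : α ∈ Ioo (0 : ℝ) (1 / 2)) (hp : 1 / α < p) :
    ∃ C > (0 : ℝ), ∀ L : ℝ, 1 ≤ L → ∀ B : ℝ → ℂ,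
      ContDiff ℝ 1 B →
      MeasureTheory.Integrable (fun x => wgt ρ x * ‖B x‖ ^ p) →
      MeasureTheory.Integrable (fun x => wgt ρ x * ‖B x‖ ^ 2) →
      MeasureTheory.Integrable (fun x => wgt ρ x * ‖deriv B x‖ ^ 2) →
      ∀ x : ℝ, |x| ≤ L →
        ‖B x‖ ≤ C * L ^ ((1 / p) * (1 - 2 * α) * (ρ - 1) + α * (1 + ρ)) *
          LpWC ρ p B ^ (1 - 2 * α) * H1WC ρ B ^ (2 * α) := by
  obtain ⟨hα0, hα2⟩ := hα
  have hαinv : (2:ℝ) < 1/α := by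
    rw [lt_div_iff₀ hα0]; linarith
  have hp2 : (2:ℝ) < p := lt_trans hαinv hp
  have hp1 : (1:ℝ) < p := by linarith
  have hp0 : (0:ℝ) < p := by linarith
  have hpne : p ≠ 0 := hp0.ne'
  have hαp : 1 < α * p := by
    have h := (div_lt_iff₀ hα0).1 hp
    nlinarith
  have h1p : 1/p < α := by
    rw [div_lt_iff₀ hp0]
    nlinarith
  set e0 : ℝ := (1/p) * (1 - 2*α) + α with he0
  refine ⟨2 * ((2:ℝ)^(ρ/2)) ^ e0, by positivity, ?_⟩
  intro L hL B hB hIp hI2 hI3 x0 hx0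
  have hL0 : (0:ℝ) < L := lt_of_lt_of_le one_pos hL
  set M := ‖B x0‖ with hM
  set IA := ∫ x, wgt ρ x * ‖B x‖ ^ p with hIA
  set IB2 := ∫ x, wgt ρ x * ‖B x‖ ^ 2 with hIB2
  set ID2 := ∫ x, wgt ρ x * ‖deriv B x‖ ^ 2 with hID2
  have hIAnn : 0 ≤ IA := by
    rw [hIA]
    exact integral_nonneg fun x =>
      mul_nonneg (wgt_pos ρ x).le (Real.rpow_nonneg (norm_nonneg _) _)
  have hIB2nn : 0 ≤ IB2 := by
    rw [hIB2]
    exact integral_nonneg fun x => mul_nonneg (wgt_pos ρ x).le (by positivity)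
  have hID2nn : 0 ≤ ID2 := by
    rw [hID2]
    exact integral_nonneg fun x => mul_nonneg (wgt_pos ρ x).le (by positivity)
  set A := LpWC ρ p B with hA
  set H := H1WC ρ B with hH
  have hA' : A = IA ^ (1/p) := by rw [hA, LpWC, hIA]
  have hAnn : 0 ≤ A := by rw [hA']; exact Real.rpow_nonneg hIAnn _
  have hHnn : 0 ≤ H := Real.sqrt_nonneg _
  set c : ℝ := (2:ℝ)^(ρ/2) * L^ρ with hc
  have hc0 : 0 < c := by rw [hc]; positivity
  set X := c^(1/p) * A with hX
  set Y := c^(1/2:ℝ) * H with hY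
  have hXnn : 0 ≤ X := by
    rw [hX]; exact mul_nonneg (Real.rpow_nonneg hc0.le _) hAnn
  have hYnn : 0 ≤ Y := by
    rw [hY]; exact mul_nonneg (Real.rpow_nonneg hc0.le _) hHnn
  clear_value M IA IB2 ID2 A H c X Y e0
  have hI2' : Integrable (fun x => wgt ρ x * ‖B x‖ ^ (2:ℝ)) := by
    simpa only [Real.rpow_two] using hI2
  have hI3' : Integrable (fun x => wgt ρ x * ‖deriv B x‖ ^ (2:ℝ)) := by
    simpa only [Real.rpow_two] using hI3
  have hBsq : (∫ x, wgt ρ x * ‖B x‖ ^ (2:ℝ)) = IB2 := by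
    rw [hIB2]; simp only [Real.rpow_two]
  have hDsq : (∫ x, wgt ρ x * ‖deriv B x‖ ^ (2:ℝ)) = ID2 := by
    rw [hID2]; simp only [Real.rpow_two]
  have hIB2H : IB2 ^ (1/2:ℝ) ≤ H := by
    rw [← Real.sqrt_eq_rpow, hH, H1WC, ← hIB2, ← hID2]
    exact Real.sqrt_le_sqrt (by linarith)
  have hID2H : ID2 ^ (1/2:ℝ) ≤ H := by
    rw [← Real.sqrt_eq_rpow, hH, H1WC, ← hIB2, ← hID2]
    exact Real.sqrt_le_sqrt (by linarith)
  have hcd : Continuous (deriv B) := hB.continuous_deriv le_rfl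
  -- core estimates for every 0 < δ ≤ 1
  have core : ∀ δ : ℝ, 0 < δ → δ ≤ 1 →
      M ≤ δ^(-(1/p)) * X + δ^(1/2:ℝ) * Y ∧
      M ≤ δ^(-(1/2):ℝ) * Y + δ^(1/2:ℝ) * Y := by
    intro δ hδ0 hδ1
    set a := max (-L) (x0 - δ) with ha
    have hx0J : x0 ∈ Icc a (a + δ) := by
      constructor
      · exact max_le (neg_le_of_abs_le hx0) (by linarith)
      · have h := le_max_right (-L) (x0 - δ)
        rw [← ha] at h
        linarith
    have hsub : Icc a (a+δ) ⊆ Icc (-L) L := by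
      apply Icc_subset_Icc (le_max_left _ _)
      have h1 : -L ≤ L - δ := by linarith
      have h2 : x0 - δ ≤ L - δ := by linarith [le_of_abs_le hx0]
      have h3 : a ≤ L - δ := by rw [ha]; exact max_le h1 h2
      linarith
    have S1 := sup_le_avg_add B hB hδ0 hx0J
    rw [← hM] at S1
    have P : ∫ y in Icc a (a+δ), ‖B y‖ ≤ δ^(1-1/p) * X := by
      have h := interval_term_bound hρ hL hB.continuous hp1 hIp hδ0 hsub
      rw [← hc, ← hIA] at h
      rw [hX, hA']
      exact h
    have Q : ∫ y in Icc a (a+δ), ‖B y‖ ≤ δ^(1/2:ℝ) * Y := by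
      have h := interval_term_bound hρ hL hB.continuous (one_lt_two : (1:ℝ) < 2)
        hI2' hδ0 hsub
      rw [← hc, hBsq] at h
      have h12 : (1:ℝ) - 1/2 = 1/2 := by norm_num
      rw [h12] at h
      calc ∫ y in Icc a (a+δ), ‖B y‖ ≤ δ^(1/2:ℝ) * (c^(1/2:ℝ) * IB2^(1/2:ℝ)) := h
        _ ≤ δ^(1/2:ℝ) * (c^(1/2:ℝ) * H) := by
            apply mul_le_mul_of_nonneg_left
              (mul_le_mul_of_nonneg_left hIB2H (Real.rpow_nonneg hc0.le _))
              (Real.rpow_nonneg hδ0.le _)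
        _ = δ^(1/2:ℝ) * Y := by rw [hY]
    have R : ∫ y in Icc a (a+δ), ‖deriv B y‖ ≤ δ^(1/2:ℝ) * Y := by
      have h := interval_term_bound hρ hL hcd (one_lt_two : (1:ℝ) < 2)
        hI3' hδ0 hsub
      rw [← hc, hDsq] at h
      have h12 : (1:ℝ) - 1/2 = 1/2 := by norm_num
      rw [h12] at h
      calc ∫ y in Icc a (a+δ), ‖deriv B y‖ ≤ δ^(1/2:ℝ) * (c^(1/2:ℝ) * ID2^(1/2:ℝ)) := h
        _ ≤ δ^(1/2:ℝ) * (c^(1/2:ℝ) * H) := by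
            apply mul_le_mul_of_nonneg_left
              (mul_le_mul_of_nonneg_left hID2H (Real.rpow_nonneg hc0.le _))
              (Real.rpow_nonneg hδ0.le _)
        _ = δ^(1/2:ℝ) * Y := by rw [hY]
    have hinvδ : (1/δ : ℝ) = δ^(-1:ℝ) := by
      rw [Real.rpow_neg hδ0.le, Real.rpow_one, one_div]
    have hδnn : (0:ℝ) ≤ 1/δ := by positivity
    constructor
    · have hidp : (1/δ) * δ^(1-1/p) = δ^(-(1/p)) := by
        rw [hinvδ, ← Real.rpow_add hδ0]
        congr 1
        ring
      calc M ≤ (1/δ) * (∫ y in Icc a (a+δ), ‖B y‖) + ∫ y in Icc a (a+δ), ‖deriv B y‖ := S1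
        _ ≤ (1/δ) * (δ^(1-1/p) * X) + δ^(1/2:ℝ) * Y := by
            have h1 := mul_le_mul_of_nonneg_left P hδnn
            linarith
        _ = δ^(-(1/p)) * X + δ^(1/2:ℝ) * Y := by rw [← mul_assoc, hidp]
    · have hid2 : (1/δ) * δ^(1/2:ℝ) = δ^(-(1/2):ℝ) := by
        rw [hinvδ, ← Real.rpow_add hδ0]
        congr 1
        ring
      calc M ≤ (1/δ) * (∫ y in Icc a (a+δ), ‖B y‖) + ∫ y in Icc a (a+δ), ‖deriv B y‖ := S1
        _ ≤ (1/δ) * (δ^(1/2:ℝ) * Y) + δ^(1/2:ℝ) * Y := by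
            have h1 := mul_le_mul_of_nonneg_left Q hδnn
            linarith
        _ = δ^(-(1/2):ℝ) * Y + δ^(1/2:ℝ) * Y := by rw [← mul_assoc, hid2]
  have E2' : M ≤ 2 * Y := by
    have h := (core 1 one_pos le_rfl).2
    simp only [Real.one_rpow, one_mul] at h
    linarith
  -- the interpolation step
  have hmain : ∀ ε : ℝ, 0 < ε → M ≤ 2 * (X+ε)^(1-2*α) * Y^(2*α) := by
    intro ε hε
    have hXε : 0 < X + ε := by linarith
    rcases le_or_gt Y (X + ε) with hcase | hcase
    · rcases eq_or_lt_of_le hYnn with hY0 | hY0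
      · calc M ≤ 2*Y := E2'
          _ = 0 := by rw [← hY0]; ring
          _ ≤ 2 * (X+ε)^(1-2*α) * Y^(2*α) := by positivity
      · have hYsplit : (Y:ℝ) = Y^(1-2*α) * Y^(2*α) := by
          rw [← Real.rpow_add hY0, show (1-2*α)+(2*α) = (1:ℝ) by ring, Real.rpow_one]
        have hYle : Y^(1-2*α) ≤ (X+ε)^(1-2*α) :=
          Real.rpow_le_rpow hY0.le hcase (by linarith)
        have hy2 : 0 ≤ Y^(2*α) := Real.rpow_nonneg hY0.le _
        have hmm := mul_le_mul_of_nonneg_right hYle hy2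
        calc M ≤ 2*Y := E2'
          _ = 2*(Y^(1-2*α)*Y^(2*α)) := by rw [← hYsplit]
          _ ≤ 2*((X+ε)^(1-2*α)*Y^(2*α)) := by linarith
          _ = 2 * (X+ε)^(1-2*α) * Y^(2*α) := by ring
    · have hY0 : 0 < Y := lt_trans hXε hcase
      set t := (X+ε)/Y with ht
      clear_value t
      have ht0 : 0 < t := by rw [ht]; exact div_pos hXε hY0
      have ht1 : t ≤ 1 := by rw [ht]; exact (div_le_one hY0).2 hcase.le
      set δ := t ^ (2*α*p) with hδ
      clear_value δ
      have hδ0 : 0 < δ := by rw [hδ]; exact Real.rpow_pos_of_pos ht0 _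
      have hδ1 : δ ≤ 1 := by rw [hδ]; exact Real.rpow_le_one ht0.le ht1 (by positivity)
      have E1 := (core δ hδ0 hδ1).1
      have hpow : ∀ s : ℝ, δ ^ s = t ^ (2*α*p*s) := fun s => by
        rw [hδ, ← Real.rpow_mul ht0.le]
      have htsplit : ∀ s : ℝ, t ^ s = (X+ε)^s * Y^(-s) := fun s => by
        rw [ht, Real.div_rpow hXε.le hY0.le, Real.rpow_neg hY0.le, div_eq_mul_inv]
      have e1 : δ^(-(1/p)) * (X+ε) = (X+ε)^(1-2*α) * Y^(2*α) := by
        rw [hpow, show 2*α*p*(-(1/p)) = -(2*α) by field_simp, htsplit, neg_neg]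
        rw [show (1:ℝ)-2*α = -(2*α) + 1 by ring, Real.rpow_add hXε, Real.rpow_one]
        ring
      have e2 : δ^(1/2:ℝ) * Y = (X+ε)^(α*p) * Y^(1-α*p) := by
        rw [hpow, show 2*α*p*(1/2:ℝ) = α*p by ring, htsplit]
        rw [show (1:ℝ)-α*p = -(α*p) + 1 by ring, Real.rpow_add hY0, Real.rpow_one]
        ring
      have e3 : (X+ε)^(α*p) * Y^(1-α*p) ≤ (X+ε)^(1-2*α) * Y^(2*α) := by
        have hts : (0:ℝ) ≤ α*p + 2*α - 1 := by linarith
        have hle := Real.rpow_le_rpow hXε.le hcase.le hts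
        have d1 : (X+ε)^(α*p) = (X+ε)^(1-2*α) * (X+ε)^(α*p+2*α-1) := by
          rw [← Real.rpow_add hXε]; congr 1; ring
        have d2 : Y^(2*α) = Y^(1-α*p) * Y^(α*p+2*α-1) := by
          rw [← Real.rpow_add hY0]; congr 1; ring
        have hpos : (0:ℝ) ≤ (X+ε)^(1-2*α) * Y^(1-α*p) :=
          mul_nonneg (Real.rpow_nonneg hXε.le _) (Real.rpow_nonneg hY0.le _)
        calc (X+ε)^(α*p) * Y^(1-α*p)
            = (X+ε)^(1-2*α) * Y^(1-α*p) * (X+ε)^(α*p+2*α-1) := by rw [d1]; ring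
          _ ≤ (X+ε)^(1-2*α) * Y^(1-α*p) * Y^(α*p+2*α-1) :=
              mul_le_mul_of_nonneg_left hle hpos
          _ = (X+ε)^(1-2*α) * Y^(2*α) := by rw [d2]; ring
      have hδp : (0:ℝ) ≤ δ^(-(1/p)) := (Real.rpow_pos_of_pos hδ0 _).le
      calc M ≤ δ^(-(1/p)) * X + δ^(1/2:ℝ) * Y := E1
        _ ≤ δ^(-(1/p)) * (X+ε) + δ^(1/2:ℝ) * Y := by
            have hXX := mul_le_mul_of_nonneg_left (by linarith : X ≤ X + ε) hδp
            linarith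
        _ = (X+ε)^(1-2*α) * Y^(2*α) + (X+ε)^(α*p) * Y^(1-α*p) := by rw [e1, e2]
        _ ≤ (X+ε)^(1-2*α) * Y^(2*α) + (X+ε)^(1-2*α) * Y^(2*α) := by linarith
        _ = 2 * (X+ε)^(1-2*α) * Y^(2*α) := by ring
  have main2 : M ≤ 2 * X^(1-2*α) * Y^(2*α) := by
    have h1 : ContinuousAt (fun s : ℝ => s ^ (1-2*α)) X :=
      Real.continuousAt_rpow_const X _ (Or.inr (by linarith))
    have h2 : Filter.Tendsto (fun ε : ℝ => X + ε) (nhdsWithin 0 (Ioi 0)) (nhds X) := by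
      have h : Filter.Tendsto (fun ε : ℝ => X + ε) (nhds 0) (nhds (X + 0)) :=
        tendsto_const_nhds.add Filter.tendsto_id
      simp only [add_zero] at h
      exact h.mono_left nhdsWithin_le_nhds
    have h3 := h1.tendsto.comp h2
    have h4 := (h3.const_mul (2:ℝ)).mul_const (Y^(2*α))
    refine ge_of_tendsto h4 ?_
    filter_upwards [eventually_mem_nhdsWithin] with ε hε
    exact hmain ε hε
  -- final conversion
  have hXsplit : X^(1-2*α) = c^((1/p)*(1-2*α)) * A^(1-2*α) := by
    rw [hX, Real.mul_rpow (Real.rpow_nonneg hc0.le _) hAnn, ← Real.rpow_mul hc0.le]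
  have hYsplit2 : Y^(2*α) = c^((1/2)*(2*α)) * H^(2*α) := by
    rw [hY, Real.mul_rpow (Real.rpow_nonneg hc0.le _) hHnn, ← Real.rpow_mul hc0.le]
  have hcomb : c^((1/p)*(1-2*α)) * c^((1/2)*(2*α)) = c^e0 := by
    rw [← Real.rpow_add hc0]
    congr 1
    rw [he0]
    ring
  have hcsplit : c^e0 = ((2:ℝ)^(ρ/2))^e0 * L^(ρ*e0) := by
    rw [hc, Real.mul_rpow (by positivity) (by positivity), ← Real.rpow_mul hL0.le]
  have hexp : ρ * e0 ≤ (1 / p) * (1 - 2 * α) * (ρ - 1) + α * (1 + ρ) := by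
    have h1 : (1-2*α) * (1/p) ≤ 1 * (1/p) :=
      mul_le_mul_of_nonneg_right (by linarith) (by positivity)
    have h2 : (1:ℝ) * (1/p) < α := by rw [one_mul]; exact h1p
    have key : (1/p) * (1 - 2*α) ≤ α := by
      have := mul_comm (1-2*α) (1/p)
      linarith
    have hdiff : (1 / p) * (1 - 2 * α) * (ρ - 1) + α * (1 + ρ) - ρ * e0
        = α - (1/p)*(1-2*α) := by rw [he0]; ring
    linarith
  have hLle : L^(ρ*e0) ≤ L^((1 / p) * (1 - 2 * α) * (ρ - 1) + α * (1 + ρ)) :=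
    Real.rpow_le_rpow_of_exponent_le hL hexp
  have hAp : 0 ≤ A^(1-2*α) := Real.rpow_nonneg hAnn _
  have hHp : 0 ≤ H^(2*α) := Real.rpow_nonneg hHnn _
  calc M ≤ 2 * X^(1-2*α) * Y^(2*α) := main2
    _ = 2 * (c^((1/p)*(1-2*α)) * A^(1-2*α)) * (c^((1/2)*(2*α)) * H^(2*α)) := by
        rw [hXsplit, hYsplit2]
    _ = 2 * (c^((1/p)*(1-2*α)) * c^((1/2)*(2*α))) * A^(1-2*α) * H^(2*α) := by ring
    _ = 2 * (((2:ℝ)^(ρ/2))^e0 * L^(ρ*e0)) * A^(1-2*α) * H^(2*α) := by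
        rw [hcomb, hcsplit]
    _ = 2 * ((2:ℝ)^(ρ/2))^e0 * L^(ρ*e0) * A^(1-2*α) * H^(2*α) := by ring
    _ ≤ 2 * ((2:ℝ)^(ρ/2))^e0 * L^((1 / p) * (1 - 2 * α) * (ρ - 1) + α * (1 + ρ)) *
          A^(1-2*α) * H^(2*α) := by
        have hKnn : (0:ℝ) ≤ 2 * ((2:ℝ)^(ρ/2))^e0 := by positivity
        have := mul_le_mul_of_nonneg_left hLle hKnn
        have h5 := mul_le_mul_of_nonneg_right (mul_le_mul_of_nonneg_right this hAp) hHp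
        linarith
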